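/- For n ≥ 3, there is no APN function F : F_2^n → F_2^n having the monomial x_1 x_2 ⋯ x_n (the AND of all coordinates) as a component function; that is, there is no nonzero a ∈ F_2^n with a·F(x) = x_1 x_2 ⋯ x_n for all x. -/

import Mathlib

def IsAPN {n : ℕ} (F : (Fin n → ZMod 2) → (Fin n → ZMod 2)) : Prop :=
  ∀ a : Fin n → ZMod 2, a ≠ 0 → ∀ b : Fin n → ZMod 2,
    (Finset.univ.filter (fun x => F x + F (x + a) = b)).card ≤ 2

def dot {t : ℕ} (a b : Fin t → ZMod 2) : ZMod 2 := ∑ i, a i * b i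

namespace Stmt16

open Finset

variable {n : ℕ}

def sg (z : ZMod 2) : ℤ := if z = 0 then 1 else -1

lemma sg_add (x y : ZMod 2) : sg (x + y) = sg x * sg y := by revert x y; decide
lemma sg_cases (z : ZMod 2) : sg z = 1 ∨ sg z = -1 := by revert z; decide
lemma sg_add_one (z : ZMod 2) : sg (z + 1) = - sg z := by revert z; decide
lemma sg_zero : sg 0 = 1 := rfl
lemma sg_mul_self (z : ZMod 2) : sg z * sg z = 1 := by revert z; decide

lemma z2_cases (z : ZMod 2) : z = 0 ∨ z = 1 := by revert z; decide
lemma z2_add_self (z : ZMod 2) : z + z = 0 := by revert z; decide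
lemma z2_add_eq_zero {u v : ZMod 2} (h : u + v = 0) : u = v := by revert u v; decide

lemma vadd_self (x : Fin n → ZMod 2) : x + x = 0 := funext fun i => z2_add_self _

lemma solve_add {A B C : Fin n → ZMod 2} (h : A + B = C) : A = C + B := by
  rw [← h, add_assoc, vadd_self, add_zero]

def e (j : Fin n) : Fin n → ZMod 2 := fun i => if i = j then 1 else 0

lemma e_self (j : Fin n) : e j j = 1 := by simp [e]
lemma e_ne {i j : Fin n} (h : i ≠ j) : e j i = 0 := by simp [e, h]

lemma dot_e_right (a : Fin n → ZMod 2) (j) : dot a (e j) = a j := by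
  unfold dot e; simp [mul_ite]

lemma dot_e_left (j : Fin n) (v) : dot (e j) v = v j := by
  unfold dot e; simp [ite_mul]

lemma card_V : Fintype.card (Fin n → ZMod 2) = 2^n := by simp [Fintype.card_fun]

lemma card_univ_V : (Finset.univ : Finset (Fin n → ZMod 2)).card = 2^n := by
  rw [Finset.card_univ, card_V]

lemma dot_add_right (a u v : Fin n → ZMod 2) : dot a (u + v) = dot a u + dot a v := by
  unfold dot
  rw [← Finset.sum_add_distrib]
  exact Finset.sum_congr rfl fun i _ => by simp [mul_add]

lemma dot_add_left (u v w : Fin n → ZMod 2) : dot (u + v) w = dot u w + dot v w := by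
  unfold dot
  rw [← Finset.sum_add_distrib]
  exact Finset.sum_congr rfl fun i _ => by simp [add_mul]

lemma dot_zero_left (v : Fin n → ZMod 2) : dot 0 v = 0 := by simp [dot]
lemma dot_zero_right (a : Fin n → ZMod 2) : dot a 0 = 0 := by simp [dot]

lemma dot_smul_right (a : Fin n → ZMod 2) (c : ZMod 2) (u : Fin n → ZMod 2) :
    dot a (fun i => c * u i) = c * dot a u := by
  unfold dot
  rw [Finset.mul_sum]
  exact Finset.sum_congr rfl fun i _ => by ring

/-- a filter defined by a predicate that is flipped by adding `w` cuts the cube in half -/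
lemma card_filter_half (hn : 1 ≤ n) (p : (Fin n → ZMod 2) → Prop) [DecidablePred p]
    (w : Fin n → ZMod 2) (hw : ∀ v, p (v + w) ↔ ¬ p v) :
    (univ.filter p).card = 2^(n-1) := by
  have key : (univ.filter p).card = (univ.filter (fun v => ¬ p v)).card := by
    apply Finset.card_bij' (fun v _ => v + w) (fun v _ => v + w)
    · intro v hv
      simp only [mem_filter, mem_univ, true_and] at hv ⊢
      exact fun hc => (hw v).mp hc hv
    · intro v hv
      simp only [mem_filter, mem_univ, true_and] at hv ⊢
      exact (hw v).mpr hv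
    · intro v _; rw [add_assoc, vadd_self, add_zero]
    · intro v _; rw [add_assoc, vadd_self, add_zero]
  have hsplit := Finset.card_filter_add_card_filter_not
    (s := (univ : Finset (Fin n → ZMod 2))) (p := p)
  rw [card_univ_V] at hsplit
  have h2 : 2^n = 2^(n-1) + 2^(n-1) := by
    have hh : n - 1 + 1 = n := by omega
    calc 2^n = 2^(n-1+1) := by rw [hh]
    _ = 2^(n-1) + 2^(n-1) := by rw [pow_succ]; ring
  omega

/-- generic pairing lemma : sums cancels under a sign-flipping involution v ↦ v + w -/
lemma sum_neg_pair {s : Finset (Fin n → ZMod 2)} {f : (Fin n → ZMod 2) → ℤ}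
    {w : Fin n → ZMod 2}
    (hmem : ∀ v ∈ s, v + w ∈ s) (hneg : ∀ v ∈ s, f (v + w) = - f v) :
    ∑ v ∈ s, f v = 0 := by
  have h1 : ∑ v ∈ s, f v = ∑ v ∈ s, f (v + w) := by
    apply Finset.sum_nbij' (fun v => v + w) (fun v => v + w)
    · exact hmem
    · exact hmem
    · intro v _; rw [add_assoc, vadd_self, add_zero]
    · intro v _; rw [add_assoc, vadd_self, add_zero]
    · intro v _
      rw [add_assoc, vadd_self, add_zero]
  have h2 : ∑ v ∈ s, f (v + w) = - ∑ v ∈ s, f v := by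
    rw [← Finset.sum_neg_distrib]
    exact Finset.sum_congr rfl hneg
  omega



def One (n : ℕ) : Fin n → ZMod 2 := fun _ => 1

lemma prod_One : (∏ i, (One n) i) = 1 := by simp [One]

lemma prod_ne_One {x : Fin n → ZMod 2} (hx : x ≠ One n) : (∏ i, x i) = 0 := by
  have : ∃ i, x i ≠ 1 := by
    by_contra hc
    push_neg at hc
    exact hx (funext fun i => hc i)
  obtain ⟨i, hi⟩ := this
  have hxi : x i = 0 := (z2_cases (x i)).resolve_right hi
  exact Finset.prod_eq_zero (Finset.mem_univ i) hxi

/-- character sum over the hyperplane `dot a v = 0` vanishes when `b ∉ {0, a}` -/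
lemma sum_sg_H0 (a : Fin n → ZMod 2) (i₀ : Fin n) (hi₀ : a i₀ = 1)
    (b : Fin n → ZMod 2) (hb0 : b ≠ 0) (hba : b ≠ a) :
    ∑ v ∈ univ.filter (fun v => dot a v = 0), sg (dot b v) = 0 := by
  by_cases hex : ∃ v₀, dot a v₀ = 0 ∧ dot b v₀ = 1
  · obtain ⟨v₀, hv₀a, hv₀b⟩ := hex
    apply sum_neg_pair (w := v₀)
    · intro v hv
      simp only [mem_filter, mem_univ, true_and] at hv ⊢
      rw [dot_add_right, hv, hv₀a, add_zero]
    · intro v _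
      rw [dot_add_right, hv₀b, sg_add_one]
  · exfalso
    push_neg at hex
    have hall : ∀ v, dot a v = 0 → dot b v = 0 := by
      intro v hv
      exact (z2_cases (dot b v)).resolve_right (hex v hv)
    have hbj : ∀ j, b j = a j * b i₀ := by
      intro j
      set vj : Fin n → ZMod 2 := e j + (fun i => a j * e i₀ i) with hvj
      have hdota : dot a vj = 0 := by
        rw [hvj, dot_add_right, dot_e_right, dot_smul_right, dot_e_right, hi₀, mul_one,
          z2_add_self]
      have hdotb := hall vj hdota
      rw [hvj, dot_add_right, dot_e_right, dot_smul_right, dot_e_right] at hdotb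
      exact z2_add_eq_zero hdotb
    rcases z2_cases (b i₀) with h0 | h1
    · exact hb0 (funext fun j => by rw [hbj j, h0, mul_zero]; rfl)
    · exact hba (funext fun j => by rw [hbj j, h1, mul_one])

/-- the sum of all vectors in the hyperplane `dot a v = 0` is zero (needs n ≥ 3) -/
lemma sum_H0_eq_zero (hn : 3 ≤ n) (a : Fin n → ZMod 2) (i₀ : Fin n) (hi₀ : a i₀ = 1) :
    ∑ v ∈ univ.filter (fun v => dot a v = 0), v = 0 := by
  have hcardH : (univ.filter (fun v => dot a v = 0)).card = 2^(n-1) := by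
    apply card_filter_half (by omega) _ (e i₀)
    intro v
    rw [dot_add_right, dot_e_right, hi₀]
    rcases z2_cases (dot a v) with h | h <;> rw [h] <;> simp <;> decide
  funext i
  rw [Finset.sum_apply]
  set H₀ := univ.filter (fun v => dot a v = 0) with hH₀
  have hrw : ∀ v ∈ H₀, v i = if v i = 1 then (1 : ZMod 2) else 0 := by
    intro v _
    rcases z2_cases (v i) with h | h <;> rw [h] <;> simp <;> decide
  rw [Finset.sum_congr rfl hrw, Finset.sum_boole]
  set P := H₀.filter (fun v => v i = 1) with hP
  suffices hdvd : 2 ∣ P.card by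
    have : ((P.card : ZMod 2)) = 0 := (ZMod.natCast_eq_zero_iff _ 2).mpr hdvd
    simpa using this
  by_cases hex : ∃ v₁, dot a v₁ = 0 ∧ v₁ i = 1
  · obtain ⟨v₁, hv₁a, hv₁i⟩ := hex
    set Q := H₀.filter (fun v => ¬ v i = 1) with hQ
    have hPQ : P.card = Q.card := by
      apply Finset.card_bij' (fun v _ => v + v₁) (fun v _ => v + v₁)
      · intro v hv
        simp only [hP, hQ, hH₀, mem_filter, mem_univ, true_and] at hv ⊢
        constructor
        · rw [dot_add_right, hv.1, hv₁a, add_zero]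
        · rw [Pi.add_apply, hv.2, hv₁i]; decide
      · intro v hv
        simp only [hP, hQ, hH₀, mem_filter, mem_univ, true_and] at hv ⊢
        constructor
        · rw [dot_add_right, hv.1, hv₁a, add_zero]
        · rcases z2_cases (v i) with h | h
          · rw [Pi.add_apply, h, hv₁i]; decide
          · exact absurd h hv.2
      · intro v _; rw [add_assoc, vadd_self, add_zero]
      · intro v _; rw [add_assoc, vadd_self, add_zero]
    have hsplit : P.card + Q.card = 2^(n-1) := by
      rw [← hcardH, hP, hQ]
      exact Finset.card_filter_add_card_filter_not (p := fun v : Fin n → ZMod 2 => v i = 1)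
    have h2 : 2^(n-1) = 2 * 2^(n-2) := by
      have hh : n - 2 + 1 = n - 1 := by omega
      calc 2^(n-1) = 2^(n-2+1) := by rw [hh]
      _ = 2 * 2^(n-2) := by rw [pow_succ]; ring
    have h3 : 2^(n-2) = 2 * 2^(n-3) := by
      have hh : n - 3 + 1 = n - 2 := by omega
      calc 2^(n-2) = 2^(n-3+1) := by rw [hh]
      _ = 2 * 2^(n-3) := by rw [pow_succ]; ring
    omega
  · have : P = ∅ := by
      rw [hP, Finset.filter_eq_empty_iff]
      intro v hv
      simp only [hH₀, mem_filter, mem_univ, true_and] at hv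
      push_neg at hex
      exact hex v hv
    rw [this]
    simp



lemma key_s (hn : 3 ≤ n) (F : (Fin n → ZMod 2) → (Fin n → ZMod 2)) (hF : IsAPN F)
    (a : Fin n → ZMod 2) (hcomp : ∀ x, dot a (F x) = ∏ i, x i)
    (i₀ : Fin n) (hi₀ : a i₀ = 1)
    (b : Fin n → ZMod 2) (hb0 : b ≠ 0) (hba : b ≠ a)
    (s : Fin n → ZMod 2) (hs : s ≠ 0) :
    ∑ x : Fin n → ZMod 2, sg (dot b (F x + F (x + s)))
      = 2 * sg (dot b (F (One n) + F (One n + s)))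
        - 2 * sg (dot b ((∑ x : Fin n → ZMod 2, F x) + (F (One n) + F (One n + s)))) := by
  classical
  -- a coordinate where s equals 1
  have hexj : ∃ j, s j ≠ 0 := by
    by_contra hc; push_neg at hc; exact hs (funext fun j => hc j)
  obtain ⟨j₀, hj₀'⟩ := hexj
  have hj₀ : s j₀ = 1 := (z2_cases (s j₀)).resolve_left hj₀'
  have hOne : (One n) j₀ = 1 := rfl
  set X := univ.filter (fun x : Fin n → ZMod 2 => x j₀ = 0) with hX
  have ht'X : (One n + s) ∈ X := by
    simp only [hX, mem_filter, mem_univ, true_and, Pi.add_apply]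
    rw [hOne, hj₀]; decide
  set X' := X.erase (One n + s) with hX'
  have hPvshift : ∀ x : Fin n → ZMod 2, F (x + s) + F (x + s + s) = F x + F (x + s) := by
    intro x; rw [add_assoc, vadd_self, add_zero, add_comm]
  have hInj : ∀ x ∈ X', ∀ y ∈ X', F x + F (x+s) = F y + F (y+s) → x = y := by
    intro x hx y hy hPxy
    by_contra hne
    have hxX : x j₀ = 0 := (mem_filter.mp (mem_of_mem_erase hx)).2
    have hyX : y j₀ = 0 := (mem_filter.mp (mem_of_mem_erase hy)).2
    have hxs : (x + s) j₀ = 1 := by rw [Pi.add_apply, hxX, hj₀, zero_add]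
    have hd2 : y ≠ x + s := by
      intro h; rw [h, hxs] at hyX; exact one_ne_zero hyX
    have hd3 : x ≠ x + s := by
      intro h; exact hs (left_eq_add.mp h)
    have hm1 : x ∉ ({y, x + s} : Finset (Fin n → ZMod 2)) := by
      simp only [mem_insert, mem_singleton]
      push_neg
      exact ⟨hne, hd3⟩
    have hm2 : y ∉ ({x + s} : Finset (Fin n → ZMod 2)) := by
      simpa using hd2
    have h3 : ({x, y, x + s} : Finset (Fin n → ZMod 2)).card = 3 := by
      rw [Finset.card_insert_of_notMem hm1, Finset.card_insert_of_notMem hm2,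
        Finset.card_singleton]
    have hsub3 : ({x, y, x + s} : Finset (Fin n → ZMod 2)) ⊆
        univ.filter (fun z => F z + F (z + s) = F x + F (x + s)) := by
      intro z hz
      simp only [mem_insert, mem_singleton] at hz
      simp only [mem_filter, mem_univ, true_and]
      rcases hz with rfl | rfl | rfl
      · rfl
      · exact hPxy.symm
      · rw [hPvshift]
    have hle2 := hF s hs (F x + F (x + s))
    have hle3 := Finset.card_le_card hsub3
    rw [h3] at hle3
    omega
  have hcardX : X.card = 2^(n-1) := by
    apply card_filter_half (by omega) _ (e j₀)
    intro v
    rw [Pi.add_apply, e_self]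
    rcases z2_cases (v j₀) with h | h <;> rw [h] <;> simp <;> decide
  have hcardX' : X'.card = 2^(n-1) - 1 := by
    rw [hX', card_erase_of_mem ht'X, hcardX]
  set I₀ := X'.image (fun x => F x + F (x + s)) with hI₀
  have hcardI : I₀.card = 2^(n-1) - 1 := by
    rw [hI₀, Finset.card_image_of_injOn (fun x hx y hy h => hInj x (by simpa using hx) y (by simpa using hy) h), hcardX']
  set H₀ := univ.filter (fun v => dot a v = 0) with hH₀
  have hIsub : I₀ ⊆ H₀ := by
    intro v hv
    rw [hI₀, mem_image] at hv
    obtain ⟨x, hx, rfl⟩ := hv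
    have hx1 : x ≠ One n := by
      intro h
      have hx0 : x j₀ = 0 := (mem_filter.mp (mem_of_mem_erase hx)).2
      rw [h, hOne] at hx0; exact one_ne_zero hx0
    have hx2 : x + s ≠ One n := by
      intro h
      apply Finset.ne_of_mem_erase hx
      rw [← h, add_assoc, vadd_self, add_zero]
    rw [hH₀, mem_filter]
    refine ⟨mem_univ _, ?_⟩
    rw [dot_add_right, hcomp, hcomp, prod_ne_One hx1, prod_ne_One hx2, add_zero]
  have hcardH : H₀.card = 2^(n-1) := by
    apply card_filter_half (by omega) _ (e i₀)
    intro v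
    rw [dot_add_right, dot_e_right, hi₀]
    rcases z2_cases (dot a v) with h | h <;> rw [h] <;> simp <;> decide
  have hone_le : (1:ℕ) ≤ 2^(n-1) := Nat.one_le_two_pow
  have hcardD : (H₀ \ I₀).card = 1 := by
    rw [Finset.card_sdiff_of_subset hIsub, hcardH, hcardI]; omega
  obtain ⟨w, hw⟩ := Finset.card_eq_one.mp hcardD
  have hunion : I₀ ∪ {w} = H₀ := by
    rw [← hw]; exact Finset.union_sdiff_of_subset hIsub
  have hdisj : Disjoint I₀ {w} := hw ▸ Finset.disjoint_sdiff
  have hXsum : ∑ x ∈ X, (F x + F (x + s)) = ∑ x : Fin n → ZMod 2, F x := by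
    rw [Finset.sum_add_distrib]
    have h2 : ∑ x ∈ X, F (x + s)
        = ∑ x ∈ univ.filter (fun x : Fin n → ZMod 2 => ¬ x j₀ = 0), F x := by
      apply Finset.sum_nbij' (fun x => x + s) (fun x => x + s)
      · intro x hx
        simp only [hX, mem_filter, mem_univ, true_and] at hx ⊢
        rw [Pi.add_apply, hx, hj₀, zero_add]
        exact one_ne_zero
      · intro x hx
        simp only [hX, mem_filter, mem_univ, true_and] at hx ⊢
        rcases z2_cases (x j₀) with h | h
        · exact absurd h hx
        · rw [Pi.add_apply, h, hj₀]; decide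
      · intro x _; rw [add_assoc, vadd_self, add_zero]
      · intro x _; rw [add_assoc, vadd_self, add_zero]
      · intro x _; rfl
    rw [h2, hX]
    exact Finset.sum_filter_add_sum_filter_not univ _ F
  have hIsum : ∑ v ∈ I₀, v
      = (∑ x : Fin n → ZMod 2, F x) + (F (One n) + F (One n + s)) := by
    rw [hI₀, Finset.sum_image (fun x hx y hy h => hInj x hx y hy h)]
    have herase := Finset.sum_erase_add X (fun x => F x + F (x + s)) ht'X
    have ht's : (One n + s) + s = One n := by rw [add_assoc, vadd_self, add_zero]
    rw [ht's] at herase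
    rw [← hX'] at herase
    have hsolve := solve_add herase
    rw [hsolve, hXsum, add_comm (F (One n + s)) (F (One n))]
  have hHsum : ∑ v ∈ H₀, v = 0 := by
    rw [hH₀]; exact sum_H0_eq_zero hn a i₀ hi₀
  have hw_eq : w = (∑ x : Fin n → ZMod 2, F x) + (F (One n) + F (One n + s)) := by
    have h0 : (∑ v ∈ I₀, v) + w = 0 := by
      have hu := Finset.sum_union hdisj (f := fun v : Fin n → ZMod 2 => v)
      rw [hunion, hHsum, Finset.sum_singleton] at hu
      exact hu.symm
    calc w = 0 + w := (zero_add w).symm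
    _ = ((∑ v ∈ I₀, v) + (∑ v ∈ I₀, v)) + w := by rw [vadd_self]
    _ = (∑ v ∈ I₀, v) + ((∑ v ∈ I₀, v) + w) := by rw [add_assoc]
    _ = (∑ v ∈ I₀, v) + 0 := by rw [h0]
    _ = ∑ v ∈ I₀, v := add_zero _
    _ = _ := hIsum
  have hcharH : ∑ v ∈ H₀, sg (dot b v) = 0 := by
    rw [hH₀]; exact sum_sg_H0 a i₀ hi₀ b hb0 hba
  have hcharI : ∑ v ∈ I₀, sg (dot b v) = - sg (dot b w) := by
    have hu := Finset.sum_union hdisj (f := fun v => sg (dot b v))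
    rw [hunion, hcharH, Finset.sum_singleton] at hu
    linarith
  have hsplitX : ∑ x : Fin n → ZMod 2, sg (dot b (F x + F (x + s)))
      = ∑ x ∈ X, sg (dot b (F x + F (x + s)))
        + ∑ x ∈ univ.filter (fun x : Fin n → ZMod 2 => ¬ x j₀ = 0), sg (dot b (F x + F (x + s))) := by
    rw [hX]
    exact (Finset.sum_filter_add_sum_filter_not univ _ _).symm
  have hsecond : ∑ x ∈ univ.filter (fun x : Fin n → ZMod 2 => ¬ x j₀ = 0), sg (dot b (F x + F (x + s)))
      = ∑ x ∈ X, sg (dot b (F x + F (x + s))) := by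
    apply Finset.sum_nbij' (fun x => x + s) (fun x => x + s)
    · intro x hx
      simp only [hX, mem_filter, mem_univ, true_and] at hx ⊢
      rcases z2_cases (x j₀) with h | h
      · exact absurd h hx
      · rw [Pi.add_apply, h, hj₀]; decide
    · intro x hx
      simp only [hX, mem_filter, mem_univ, true_and] at hx ⊢
      rw [Pi.add_apply, hx, hj₀, zero_add]
      exact one_ne_zero
    · intro x _; rw [add_assoc, vadd_self, add_zero]
    · intro x _; rw [add_assoc, vadd_self, add_zero]
    · intro x _
      rw [hPvshift]
  have hXeq : ∑ x ∈ X, sg (dot b (F x + F (x + s)))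
      = ∑ x ∈ X', sg (dot b (F x + F (x + s)))
        + sg (dot b (F (One n) + F (One n + s))) := by
    have herase := Finset.sum_erase_add X (fun x => sg (dot b (F x + F (x + s)))) ht'X
    have ht's : (One n + s) + s = One n := by rw [add_assoc, vadd_self, add_zero]
    rw [ht's, add_comm (F (One n + s)) (F (One n))] at herase
    rw [← hX'] at herase
    exact herase.symm
  have hX'eq : ∑ x ∈ X', sg (dot b (F x + F (x + s))) = - sg (dot b w) := by
    rw [← hcharI, hI₀, Finset.sum_image (fun x hx y hy h => hInj x hx y hy h)]
  rw [hsplitX, hsecond, hXeq, hX'eq, hw_eq]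
  ring



def Tb (F : (Fin n → ZMod 2) → (Fin n → ZMod 2)) (b : Fin n → ZMod 2) : ℤ :=
  ∑ x : Fin n → ZMod 2, sg (dot b (F x))

lemma Tb_zero (F : (Fin n → ZMod 2) → (Fin n → ZMod 2)) :
    Tb F (0 : Fin n → ZMod 2) = 2^n := by
  simp only [Tb]
  have h : ∀ x : Fin n → ZMod 2, sg (dot 0 (F x)) = 1 := fun x => by
    rw [dot_zero_left, sg_zero]
  rw [Finset.sum_congr rfl fun x _ => h x, Finset.sum_const, card_univ_V]
  simp

lemma key_b (hn : 3 ≤ n) (F : (Fin n → ZMod 2) → (Fin n → ZMod 2)) (hF : IsAPN F)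
    (a : Fin n → ZMod 2) (hcomp : ∀ x, dot a (F x) = ∏ i, x i)
    (i₀ : Fin n) (hi₀ : a i₀ = 1)
    (b : Fin n → ZMod 2) (hb0 : b ≠ 0) (hba : b ≠ a) :
    Tb F b * Tb F b
      = 2^n + 2 * (1 - sg (dot b (∑ x : Fin n → ZMod 2, F x)))
          * (sg (dot b (F (One n)))
             * (Tb F b - sg (dot b (F (One n))))) := by
  classical
  have hTT : Tb F b * Tb F b
      = ∑ x : Fin n → ZMod 2, ∑ y : Fin n → ZMod 2, sg (dot b (F x + F y)) := by
    simp only [Tb]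
    rw [Finset.sum_mul_sum]
    exact Finset.sum_congr rfl fun x _ => Finset.sum_congr rfl fun y _ => by
      rw [dot_add_right, sg_add]
  have hswap : ∀ x : Fin n → ZMod 2, ∑ y : Fin n → ZMod 2, sg (dot b (F x + F y))
      = ∑ s : Fin n → ZMod 2, sg (dot b (F x + F (x + s))) := by
    intro x
    exact (Equiv.sum_comp (Equiv.addLeft x) (fun y => sg (dot b (F x + F y)))).symm
  have hmain : Tb F b * Tb F b
      = ∑ s : Fin n → ZMod 2, ∑ x : Fin n → ZMod 2, sg (dot b (F x + F (x + s))) := by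
    rw [hTT, Finset.sum_congr rfl (fun x _ => hswap x)]
    exact Finset.sum_comm
  have h0term : ∑ x : Fin n → ZMod 2, sg (dot b (F x + F (x + 0))) = 2^n := by
    have h : ∀ x : Fin n → ZMod 2, sg (dot b (F x + F (x + 0))) = 1 := by
      intro x; rw [add_zero, vadd_self, dot_zero_right, sg_zero]
    rw [Finset.sum_congr rfl fun x _ => h x, Finset.sum_const, card_univ_V]
    simp
  have hsplit0 := Finset.add_sum_erase univ
    (fun s => ∑ x : Fin n → ZMod 2, sg (dot b (F x + F (x + s)))) (mem_univ 0)
  have herase : ∀ s ∈ univ.erase (0 : Fin n → ZMod 2),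
      ∑ x : Fin n → ZMod 2, sg (dot b (F x + F (x + s)))
        = (2 * (1 - sg (dot b (∑ x : Fin n → ZMod 2, F x)))
            * sg (dot b (F (One n)))) * sg (dot b (F (One n + s))) := by
    intro s hsne
    have hs : s ≠ 0 := Finset.ne_of_mem_erase hsne
    rw [key_s hn F hF a hcomp i₀ hi₀ b hb0 hba s hs]
    simp only [dot_add_right, sg_add]
    ring
  have hsum_erase : ∑ s ∈ univ.erase (0 : Fin n → ZMod 2), sg (dot b (F (One n + s)))
      = Tb F b - sg (dot b (F (One n))) := by
    have h1 : ∑ s ∈ univ.erase (0 : Fin n → ZMod 2), sg (dot b (F (One n + s)))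
        = ∑ y ∈ univ.erase (One n), sg (dot b (F y)) := by
      apply Finset.sum_nbij' (fun s => One n + s) (fun y => One n + y)
      · intro x hx
        simp only [mem_erase, mem_univ, and_true] at hx ⊢
        intro hc
        apply hx
        calc x = One n + (One n + x) := by rw [← add_assoc, vadd_self, zero_add]
        _ = One n + One n := by rw [hc]
        _ = 0 := vadd_self _
      · intro y hy
        simp only [mem_erase, mem_univ, and_true] at hy ⊢
        intro hc
        apply hy
        calc y = One n + (One n + y) := by rw [← add_assoc, vadd_self, zero_add]
        _ = One n + 0 := by rw [hc]
        _ = One n := add_zero _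
      · intro x _; rw [← add_assoc, vadd_self, zero_add]
      · intro y _; rw [← add_assoc, vadd_self, zero_add]
      · intro x _; rfl
    rw [h1]
    have h2 := Finset.add_sum_erase univ (fun y => sg (dot b (F y))) (mem_univ (One n))
    simp only [Tb]
    linarith
  rw [hmain, ← hsplit0, h0term, Finset.sum_congr rfl herase, ← Finset.mul_sum, hsum_erase]
  ring

lemma key_sq (hn : 3 ≤ n) (F : (Fin n → ZMod 2) → (Fin n → ZMod 2)) (hF : IsAPN F)
    (a : Fin n → ZMod 2) (hcomp : ∀ x, dot a (F x) = ∏ i, x i)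
    (i₀ : Fin n) (hi₀ : a i₀ = 1)
    (b : Fin n → ZMod 2) (hb0 : b ≠ 0) (hba : b ≠ a) :
    (Tb F b - (1 - sg (dot b (∑ x : Fin n → ZMod 2, F x)))
        * sg (dot b (F (One n))))^2 = 2^n := by
  have hk := key_b hn F hF a hcomp i₀ hi₀ b hb0 hba
  rcases sg_cases (dot b (∑ x : Fin n → ZMod 2, F x)) with hε | hε <;>
    rw [hε] at hk ⊢ <;>
    rcases sg_cases (dot b (F (One n))) with hc | hc <;>
    rw [hc] at hk ⊢ <;> ring_nf <;> ring_nf at hk <;> linarith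

lemma n_eq_two_mul {n : ℕ} {r : ℤ} (h : r^2 = 2^n) : ∃ m, n = 2*m := by
  have h2 : r.natAbs ^ 2 = 2 ^ n := by
    have h3 := congrArg Int.natAbs h
    rwa [Int.natAbs_pow, Int.natAbs_pow] at h3
  have hdvd : r.natAbs ∣ 2^n := ⟨r.natAbs, by rw [← h2]; ring⟩
  obtain ⟨k, hk, hek⟩ := (Nat.dvd_prime_pow Nat.prime_two).mp hdvd
  rw [hek, ← pow_mul] at h2
  have := Nat.pow_right_injective (le_refl 2) h2
  exact ⟨k, by omega⟩

lemma sum_sg_B (hn : 1 ≤ n) (i₀ : Fin n) (v : Fin n → ZMod 2) :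
    ∑ b ∈ univ.filter (fun b : Fin n → ZMod 2 => b i₀ = 0), sg (dot b v)
      = if (∀ j, j ≠ i₀ → v j = 0) then (2^(n-1) : ℤ) else 0 := by
  classical
  split_ifs with hv
  · have hz : ∀ b ∈ univ.filter (fun b : Fin n → ZMod 2 => b i₀ = 0), sg (dot b v) = 1 := by
      intro b hb
      simp only [mem_filter, mem_univ, true_and] at hb
      have hd : dot b v = 0 := by
        unfold dot
        apply Finset.sum_eq_zero
        intro j _
        by_cases hj : j = i₀
        · rw [hj, hb, zero_mul]
        · rw [hv j hj, mul_zero]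
      rw [hd, sg_zero]
    rw [Finset.sum_congr rfl hz, Finset.sum_const]
    have hcB : (univ.filter (fun b : Fin n → ZMod 2 => b i₀ = 0)).card = 2^(n-1) := by
      apply card_filter_half hn _ (e i₀)
      intro u
      rw [Pi.add_apply, e_self]
      rcases z2_cases (u i₀) with h | h <;> rw [h] <;> simp <;> decide
    rw [hcB]; simp
  · push_neg at hv
    obtain ⟨j₁, hj₁ne, hj₁⟩ := hv
    have hj₁v : v j₁ = 1 := (z2_cases (v j₁)).resolve_left hj₁
    apply sum_neg_pair (w := e j₁)
    · intro u hu
      simp only [mem_filter, mem_univ, true_and] at hu ⊢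
      rw [Pi.add_apply, hu, e_ne (Ne.symm hj₁ne), add_zero]
    · intro u _
      rw [dot_add_left, dot_e_left, hj₁v, sg_add_one]

/-- the heart of the final contradiction -/
lemma final (hn : 3 ≤ n) (F : (Fin n → ZMod 2) → (Fin n → ZMod 2)) (hF : IsAPN F)
    (a : Fin n → ZMod 2) (ha : a ≠ 0)
    (hcomp : ∀ x, dot a (F x) = ∏ i, x i) : False := by
  classical
  have hexi : ∃ i, a i ≠ 0 := by
    by_contra hc; push_neg at hc; exact ha (funext fun i => hc i)
  obtain ⟨i₀, hi₀'⟩ := hexi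
  have hi₀ : a i₀ = 1 := (z2_cases (a i₀)).resolve_left hi₀'
  set B := univ.filter (fun b : Fin n → ZMod 2 => b i₀ = 0) with hB
  have hBcard : B.card = 2^(n-1) := by
    rw [hB]
    apply card_filter_half (by omega) _ (e i₀)
    intro u
    rw [Pi.add_apply, e_self]
    rcases z2_cases (u i₀) with h | h <;> rw [h] <;> simp <;> decide
  have h0B : (0 : Fin n → ZMod 2) ∈ B := by
    rw [hB]; simp
  have hBmem : ∀ b ∈ B.erase 0, b ≠ 0 ∧ b ≠ a := by
    intro b hb
    refine ⟨Finset.ne_of_mem_erase hb, ?_⟩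
    intro h
    have hbi : b i₀ = 0 := (Finset.mem_filter.mp (Finset.mem_of_mem_erase hb)).2
    rw [h, hi₀] at hbi
    exact one_ne_zero hbi
  set Eb := ∑ x : Fin n → ZMod 2, F x with hEb
  set θ : (Fin n → ZMod 2) → ℤ :=
    fun b => (1 - sg (dot b Eb)) * sg (dot b (F (One n))) with hθ
  have hsq : ∀ b ∈ B.erase 0, (Tb F b - θ b)^2 = 2^n := by
    intro b hb
    obtain ⟨h1, h2⟩ := hBmem b hb
    exact key_sq hn F hF a hcomp i₀ hi₀ b h1 h2
  have hone_le : (1:ℕ) ≤ 2^(n-1) := Nat.one_le_two_pow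
  have hfour_le : (4:ℕ) ≤ 2^(n-1) := by
    calc (4:ℕ) = 2^2 := rfl
    _ ≤ 2^(n-1) := Nat.pow_le_pow_right (by norm_num) (by omega)
  have hne : (B.erase 0).Nonempty := by
    apply Finset.card_pos.mp
    rw [Finset.card_erase_of_mem h0B, hBcard]
    omega
  obtain ⟨b₀, hb₀⟩ := hne
  obtain ⟨m, hm⟩ := n_eq_two_mul (hsq b₀ hb₀)
  have hm2 : 2 ≤ m := by omega
  set η : (Fin n → ZMod 2) → ℤ :=
    fun b => if Tb F b - θ b = 2^m then 1 else -1 with hη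
  have hpow2 : (2:ℤ)^n = 2^m * 2^m := by
    rw [hm, two_mul, pow_add]
  have hηval : ∀ b ∈ B.erase 0, Tb F b = θ b + 2^m * η b := by
    intro b hb
    have h := hsq b hb
    rw [hpow2] at h
    have h2 : (Tb F b - θ b - 2^m) * (Tb F b - θ b + 2^m) = 0 := by nlinarith [h]
    have hppos : (0:ℤ) < 2^m := by positivity
    rcases mul_eq_zero.mp h2 with h3 | h3
    · simp only [hη]
      rw [if_pos (by linarith)]
      linarith
    · simp only [hη]
      rw [if_neg (by intro hc; linarith)]
      linarith
  have hηpm : ∀ b, η b = 1 ∨ η b = -1 := by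
    intro b; simp only [hη]; split_ifs <;> simp
  set N := (univ.filter (fun x : Fin n → ZMod 2 => ∀ j, j ≠ i₀ → F x j = 0)).card with hN
  have hcount : ∑ b ∈ B, Tb F b = 2^(n-1) * (N:ℤ) := by
    have h1 : ∑ b ∈ B, Tb F b = ∑ x : Fin n → ZMod 2, ∑ b ∈ B, sg (dot b (F x)) := by
      simp only [Tb]
      exact Finset.sum_comm
    have h2 : ∀ x : Fin n → ZMod 2, ∑ b ∈ B, sg (dot b (F x))
        = if (∀ j, j ≠ i₀ → F x j = 0) then (2^(n-1):ℤ) else 0 := by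
      intro x
      rw [hB]
      exact sum_sg_B (by omega) i₀ (F x)
    rw [h1, Finset.sum_congr rfl fun x _ => h2 x, Finset.sum_ite, Finset.sum_const,
      Finset.sum_const_zero, add_zero, ← hN, nsmul_eq_mul, mul_comm]
  have hsplitB := Finset.add_sum_erase B (fun b => Tb F b) h0B
  set I₁ := (if (∀ j, j ≠ i₀ → (F (One n)) j = 0) then (2^(n-1):ℤ) else 0) with hI₁
  set I₂ := (if (∀ j, j ≠ i₀ → (Eb + F (One n)) j = 0) then (2^(n-1):ℤ) else 0) with hI₂
  have hθsum : ∑ b ∈ B.erase 0, θ b = I₁ - I₂ := by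
    have hθb : ∀ b : Fin n → ZMod 2,
        θ b = sg (dot b (F (One n))) - sg (dot b (Eb + F (One n))) := by
      intro b
      simp only [hθ]
      rw [dot_add_right, sg_add]
      ring
    rw [Finset.sum_congr rfl fun b _ => hθb b, Finset.sum_sub_distrib]
    have e1 := Finset.add_sum_erase B (fun b => sg (dot b (F (One n)))) h0B
    have e2 := Finset.add_sum_erase B (fun b => sg (dot b (Eb + F (One n)))) h0B
    have hB1 : ∑ b ∈ B, sg (dot b (F (One n))) = I₁ := by
      rw [hB, hI₁]; exact sum_sg_B (by omega) i₀ _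
    have hB2 : ∑ b ∈ B, sg (dot b (Eb + F (One n))) = I₂ := by
      rw [hB, hI₂]; exact sum_sg_B (by omega) i₀ _
    have hz1 : sg (dot (0 : Fin n → ZMod 2) (F (One n))) = 1 := by
      rw [dot_zero_left, sg_zero]
    have hz2 : sg (dot (0 : Fin n → ZMod 2) (Eb + F (One n))) = 1 := by
      rw [dot_zero_left, sg_zero]
    rw [hB1, hz1] at e1
    rw [hB2, hz2] at e2
    linarith
  set K := ∑ b ∈ B.erase 0, η b with hK
  have hKsum : ∑ b ∈ B.erase 0, Tb F b = (I₁ - I₂) + 2^m * K := by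
    rw [hK, Finset.mul_sum, ← hθsum, ← Finset.sum_add_distrib]
    exact Finset.sum_congr rfl hηval
  have hmainEq : (2:ℤ)^n + (I₁ - I₂) + 2^m * K = 2^(n-1) * (N:ℤ) := by
    have h := hsplitB
    rw [hcount, Tb_zero, hKsum] at h
    linarith
  -- divisibility
  have hm1n : m + 1 ≤ n - 1 := by omega
  have hm1n2 : m + 1 ≤ n := by omega
  have d1 : (2:ℤ)^(m+1) ∣ 2^n := pow_dvd_pow 2 hm1n2
  have d2 : (2:ℤ)^(m+1) ∣ 2^(n-1) * (N:ℤ) :=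
    Dvd.dvd.mul_right (pow_dvd_pow 2 hm1n) _
  have d3 : (2:ℤ)^(m+1) ∣ I₁ := by
    rw [hI₁]; split_ifs
    · exact pow_dvd_pow 2 hm1n
    · exact dvd_zero _
  have d4 : (2:ℤ)^(m+1) ∣ I₂ := by
    rw [hI₂]; split_ifs
    · exact pow_dvd_pow 2 hm1n
    · exact dvd_zero _
  have hdvd : (2:ℤ)^(m+1) ∣ 2^m * K := by
    have heq : 2^m * K = 2^(n-1) * (N:ℤ) - 2^n - I₁ + I₂ := by linarith
    rw [heq]
    exact dvd_add (dvd_sub (dvd_sub d2 d1) d3) d4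
  have h2K : (2:ℤ) ∣ K := by
    have hps : (2:ℤ)^(m+1) = 2^m * 2 := by rw [pow_succ]
    rw [hps] at hdvd
    exact (mul_dvd_mul_iff_left (a := (2:ℤ)^m) (by positivity)).mp hdvd
  -- parity contradiction
  have hKodd : ((K : ZMod 2)) = 1 := by
    rw [hK]
    push_cast
    have hηz : ∀ b ∈ B.erase 0, ((η b : ZMod 2)) = 1 := by
      intro b _
      rcases hηpm b with h | h <;> rw [h]
      · simp
      · rw [Int.cast_neg, Int.cast_one]; decide
    rw [Finset.sum_congr rfl hηz, Finset.sum_const, Finset.card_erase_of_mem h0B, hBcard]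
    have hpow : (2:ℕ)^(n-1) = 2 * 2^(n-2) := by
      have hh : n - 2 + 1 = n - 1 := by omega
      calc (2:ℕ)^(n-1) = 2^(n-2+1) := by rw [hh]
      _ = 2 * 2^(n-2) := by rw [pow_succ]; ring
    have h2n : (1:ℕ) ≤ 2^(n-2) := Nat.one_le_two_pow
    obtain ⟨t, ht⟩ : ∃ t, 2^(n-1) - 1 = 2*t+1 := ⟨2^(n-2)-1, by omega⟩
    rw [ht, nsmul_eq_mul, mul_one]
    push_cast
    have h2z : (2 : ZMod 2) = 0 := by decide
    rw [h2z, zero_mul, zero_add]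
  have hK0 : ((K : ZMod 2)) = 0 := by
    obtain ⟨k, hk⟩ := h2K
    rw [hk]
    push_cast
    have h2z : (2 : ZMod 2) = 0 := by decide
    rw [h2z, zero_mul]
  rw [hKodd] at hK0
  exact one_ne_zero hK0

end Stmt16

theorem stmt_16 {n : ℕ} (hn : 3 ≤ n) (F : (Fin n → ZMod 2) → (Fin n → ZMod 2))
    (hF : IsAPN F) (a : Fin n → ZMod 2) (ha : a ≠ 0) :
    ¬ (∀ x : Fin n → ZMod 2, dot a (F x) = ∏ i, x i) := by
  intro hcomp
  exact Stmt16.final hn F hF a ha hcomp
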